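/- In the linearly constrained setting: f strongly convex with parameter θ on closed convex X, Ã = [A'; A], dual function d with ∇d(u) = Ãx̄(u) + b̃ Lipschitz with constant σ_max(Ã)²/θ, dual optimum u⋆ with ∇d(u⋆)ᵀu⋆ = 0 and ⟨∇d(u⋆), u − u⋆⟩ ≤ 0 for dual feasible u. Then for every dual feasible u: f(x̄(u)) − f⋆ ≤ ‖u‖·σ_max(Ã)·√(2(d⋆ − d(u))/θ). -/

import Mathlib

open scoped RealInnerProductSpace
open Set

variable {E : Type*} [NormedAddCommGroup E] [InnerProductSpace ℝ E] [CompleteSpace E]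

/-- derivative of a function along a line, from a gradient. -/
lemma line_hasDerivAt {d : E → ℝ} {G x v : E} {t : ℝ}
    (hg : HasGradientAt d G (x + t • v)) :
    HasDerivAt (fun s : ℝ => d (x + s • v)) ⟪G, v⟫ t := by
  have hline : HasDerivAt (fun s : ℝ => x + s • v) v t := by
    simpa using ((hasDerivAt_id t).smul_const v).const_add x
  have := hg.hasFDerivAt.comp_hasDerivAt t hline
  simpa [InnerProductSpace.toDual_apply_apply, Function.comp_def] using this

/-- first-order inequality for concave differentiable functions. -/
lemma concave_first_order {d : E → ℝ} (hconc : ConcaveOn ℝ Set.univ d)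
    {G x : E} (hg : HasGradientAt d G x) (y : E) :
    d y ≤ d x + ⟪G, y - x⟫ := by
  set v := y - x with hv
  have hd0 : HasDerivAt (fun s : ℝ => d (x + s • v)) ⟪G, v⟫ 0 := by
    apply line_hasDerivAt; simpa using hg
  have hslope : Filter.Tendsto (slope (fun s : ℝ => d (x + s • v)) 0) (nhdsWithin 0 (Ioi 0))
      (nhds ⟪G, v⟫) := by
    have := hasDerivAt_iff_tendsto_slope.mp hd0
    exact this.mono_left (nhdsWithin_mono _ (by intro t ht; exact ne_of_gt ht))
  have hbound : ∀ t ∈ Ioo (0:ℝ) 1, d y - d x ≤ slope (fun s : ℝ => d (x + s • v)) 0 t := by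
    intro t ht
    have hcomb : (1 - t) • x + t • y = x + t • v := by rw [hv]; module
    have := hconc.2 (mem_univ x) (mem_univ y) (by linarith [ht.2] : (0:ℝ) ≤ 1 - t)
      (le_of_lt ht.1) (by ring)
    rw [hcomb] at this
    have ht0 : (0:ℝ) < t := ht.1
    rw [slope_def_field]
    simp only [smul_eq_mul] at this
    simp only [zero_smul, add_zero, sub_zero]
    rw [le_div_iff₀ ht0]
    nlinarith [this]
  have hev : ∀ᶠ t in nhdsWithin 0 (Ioi (0:ℝ)), d y - d x ≤ slope (fun s : ℝ => d (x + s • v)) 0 t := by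
    filter_upwards [Ioo_mem_nhdsGT_of_mem (by constructor <;> norm_num : (0:ℝ) ∈ Ico (0:ℝ) 1)] with t ht
    exact hbound t ht
  have := ge_of_tendsto hslope hev
  linarith

/-- descent lemma for differentiable function with Lipschitz gradient. -/
lemma descent_lemma {d : E → ℝ} {g : E → E} {L : ℝ} (hL : 0 ≤ L)
    (hgrad : ∀ u, HasGradientAt d (g u) u)
    (hlip : ∀ u v, ‖g u - g v‖ ≤ L * ‖u - v‖) (x y : E) :
    d x + ⟪g x, y - x⟫ - L / 2 * ‖y - x‖ ^ 2 ≤ d y := by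
  set v := y - x with hv
  set c : ℝ := ⟪g x, v⟫ with hc
  set h : ℝ → ℝ := fun t => d (x + t • v) - t * c + t ^ 2 * (L / 2 * ‖v‖ ^ 2) with hh
  have hderiv : ∀ t : ℝ, HasDerivAt h
      (⟪g (x + t • v), v⟫ - c + 2 * t ^ 1 * (L / 2 * ‖v‖ ^ 2)) t := by
    intro t
    exact ((line_hasDerivAt (hgrad _)).sub (hasDerivAt_mul_const c)).add
      ((hasDerivAt_pow 2 t).mul_const _)
  have hmono : MonotoneOn h (Icc (0:ℝ) 1) := by
    apply monotoneOn_of_deriv_nonneg (convex_Icc 0 1)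
    · exact (fun t _ => (hderiv t).differentiableAt.continuousAt.continuousWithinAt)
    · exact fun t _ => ((hderiv t).differentiableAt).differentiableWithinAt
    · intro t ht
      rw [interior_Icc] at ht
      rw [(hderiv t).deriv]
      have h1 : ⟪g (x + t • v) - g x, v⟫ ≥ -(L * t * ‖v‖ ^ 2) := by
        have := abs_real_inner_le_norm (g (x + t • v) - g x) v
        have h2 : ‖g (x + t • v) - g x‖ ≤ L * (t * ‖v‖) := by
          have := hlip (x + t • v) x
          simpa [norm_smul, abs_of_pos ht.1, mul_assoc] using this
        have h3 : |⟪g (x + t • v) - g x, v⟫| ≤ L * (t * ‖v‖) * ‖v‖ :=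
          le_trans (abs_real_inner_le_norm _ _)
            (mul_le_mul_of_nonneg_right h2 (norm_nonneg v))
        have := neg_abs_le ⟪g (x + t • v) - g x, v⟫
        nlinarith [this, h3]
      have : ⟪g (x + t • v), v⟫ - c = ⟪g (x + t • v) - g x, v⟫ := by
        rw [hc, inner_sub_left]
      nlinarith [h1, this]
  have h01 := hmono (by constructor <;> norm_num) (by constructor <;> norm_num) zero_le_one
  have hh0 : h 0 = d x := by simp [hh]
  have hh1 : h 1 = d y - c + L / 2 * ‖v‖ ^ 2 := by
    simp [hh, hv]
  rw [hh0, hh1] at h01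
  linarith

section MainHelpers







/-- Gradient of `u ↦ d u - ⟪c, u⟫`. -/
lemma hasGradientAt_sub_inner' {d : E → ℝ} {G : E} (c : E) {x : E}
    (h : HasGradientAt d G x) :
    HasGradientAt (fun u => d u - ⟪c, u⟫) (G - c) x := by
  have hc : HasFDerivAt (fun u : E => ⟪c, u⟫) (InnerProductSpace.toDual ℝ E c) x := by
    exact (InnerProductSpace.toDual ℝ E c).hasFDerivAt.congr_of_eventuallyEq
      (Filter.Eventually.of_forall fun u => by simp [InnerProductSpace.toDual_apply_apply])
  rw [hasGradientAt_iff_hasFDerivAt, map_sub]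
  exact h.hasFDerivAt.sub hc

lemma concaveOn_sub_inner' {d : E → ℝ} (hconc : ConcaveOn ℝ Set.univ d) (c : E) :
    ConcaveOn ℝ Set.univ (fun u => d u - ⟪c, u⟫) := by
  have : ConvexOn ℝ Set.univ (fun u : E => ⟪c, u⟫) := by
    refine ⟨convex_univ, fun x _ y _ a b _ _ _ => le_of_eq ?_⟩
    simp [inner_add_right, real_inner_smul_right]
  exact hconc.sub this

/-- `‖∇d(u) − ∇d(u⋆)‖² ≤ 2L(d⋆ − d(u))`. -/
lemma grad_norm_sq_bound {d : E → ℝ} {g : E → E} {L : ℝ} (hL : 0 ≤ L)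
    (hconc : ConcaveOn ℝ Set.univ d)
    (hgrad : ∀ u, HasGradientAt d (g u) u)
    (hlip : ∀ u v, ‖g u - g v‖ ≤ L * ‖u - v‖)
    {ustar u : E} {dstar : ℝ} (hds : d ustar = dstar)
    (hcs : ⟪g ustar, ustar⟫ = 0) (hfo : ⟪g ustar, u - ustar⟫ ≤ 0) :
    ‖g u - g ustar‖ ^ 2 ≤ 2 * L * (dstar - d u) := by
  rcases eq_or_lt_of_le hL with hL0 | hLpos
  · have := hlip u ustar
    rw [← hL0, zero_mul] at this
    have h0 : ‖g u - g ustar‖ = 0 := le_antisymm this (norm_nonneg _)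
    rw [h0, ← hL0]
    have hdu : d u ≤ dstar := by
      rw [← hds]
      have := concave_first_order hconc (hgrad ustar) u
      nlinarith [hfo, this]
    nlinarith
  · set φ : E → ℝ := fun w => d w - ⟪g ustar, w⟫ with hφ
    have hφconc : ConcaveOn ℝ Set.univ φ := concaveOn_sub_inner' hconc _
    have hφgrad : ∀ w, HasGradientAt φ (g w - g ustar) w :=
      fun w => hasGradientAt_sub_inner' _ (hgrad w)
    have hφlip : ∀ a b, ‖(g a - g ustar) - (g b - g ustar)‖ ≤ L * ‖a - b‖ := by
      intro a b
      simpa using hlip a b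
    set Δ : E := g u - g ustar with hΔdef
    set y : E := u + L⁻¹ • Δ with hy
    have hdesc := descent_lemma hL hφgrad hφlip u y
    have hyu : y - u = L⁻¹ • Δ := by rw [hy]; abel
    have hinner : ⟪Δ, y - u⟫ = L⁻¹ * ‖Δ‖ ^ 2 := by
      rw [hyu, real_inner_smul_right, real_inner_self_eq_norm_sq]
    have hnorm : ‖y - u‖ ^ 2 = L⁻¹ ^ 2 * ‖Δ‖ ^ 2 := by
      rw [hyu, norm_smul]
      simp [abs_of_nonneg hL]
      ring
    have hmax : φ y ≤ φ ustar := by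
      have h0 : HasGradientAt φ (0 : E) ustar := by
        have := hφgrad ustar
        rwa [sub_self] at this
      have := concave_first_order hφconc h0 y
      simpa using this
    have hφdiff : φ ustar - φ u ≤ dstar - d u := by
      rw [hφ]
      simp only
      have h1 : ⟪g ustar, u⟫ = ⟪g ustar, u - ustar⟫ + ⟪g ustar, ustar⟫ := by
        rw [← inner_add_right]
        congr 1
        abel
      rw [hcs, add_zero] at h1
      rw [hds] at *
      nlinarith [hfo, h1]
    rw [hinner, hnorm] at hdesc
    clear_value φ Δ y
    have hkey : L⁻¹ * ‖Δ‖ ^ 2 - L / 2 * (L⁻¹ ^ 2 * ‖Δ‖ ^ 2) ≤ dstar - d u := by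
      linarith [hdesc, hmax, hφdiff]
    have hsimp : L⁻¹ * ‖Δ‖ ^ 2 - L / 2 * (L⁻¹ ^ 2 * ‖Δ‖ ^ 2) = ‖Δ‖ ^ 2 / (2 * L) := by
      field_simp
      ring
    rw [hsimp, div_le_iff₀ (by positivity)] at hkey
    ring_nf at hkey ⊢
    linarith [hkey]

end MainHelpers

/-- Upper bound on primal suboptimality for the linearly constrained problem:
`f(x̄(u)) − f⋆ ≤ ‖u‖·σ_max(Ã)·√(2(d⋆ − d(u))/θ)` for every dual feasible `u`,
where `σ_max(Ã)` is the operator norm of `Ã`. -/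
theorem primal_suboptimality_upper_bound_linear {n m p : ℕ}
    (X : Set (EuclideanSpace ℝ (Fin n))) (hXcl : IsClosed X) (hXcv : Convex ℝ X)
    (f : EuclideanSpace ℝ (Fin n) → ℝ) (θ : ℝ) (hθ : 0 < θ)
    (At : EuclideanSpace ℝ (Fin n) →L[ℝ] EuclideanSpace ℝ (Fin (m + p)))
    (bt : EuclideanSpace ℝ (Fin (m + p)))
    (d : EuclideanSpace ℝ (Fin (m + p)) → ℝ)
    (xbar : EuclideanSpace ℝ (Fin (m + p)) → EuclideanSpace ℝ (Fin n))
    (D : Set (EuclideanSpace ℝ (Fin (m + p))))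
    (hD : D = {u | ∀ i : Fin (m + p), (i : ℕ) < m → 0 ≤ u i})
    (hconc : ConcaveOn ℝ Set.univ d)
    -- `∇d(u) = Ãx̄(u) + b̃`
    (hgrad : ∀ u, HasGradientAt d (At (xbar u) + bt) u)
    -- `∇d` is Lipschitz with constant `σ_max(Ã)²/θ`
    (hlip : ∀ u v, ‖(At (xbar u) + bt) - (At (xbar v) + bt)‖ ≤ ‖At‖ ^ 2 / θ * ‖u - v‖)
    -- `f(x̄(u)) = d(u) − ⟪∇d(u), u⟫`
    (hfd : ∀ u, f (xbar u) = d u - ⟪At (xbar u) + bt, u⟫)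
    (ustar : EuclideanSpace ℝ (Fin (m + p))) (hustar : ustar ∈ D)
    (dstar fstar : ℝ) (hds : d ustar = dstar) (hub : ∀ v ∈ D, d v ≤ dstar)
    (hfs : fstar = dstar)
    -- complementary slackness and first-order optimality at `u⋆`
    (hcs : ⟪At (xbar ustar) + bt, ustar⟫ = 0)
    (hfo : ∀ u ∈ D, ⟪At (xbar ustar) + bt, u - ustar⟫ ≤ 0) :
    ∀ u ∈ D, f (xbar u) - fstar ≤ ‖u‖ * ‖At‖ * Real.sqrt (2 * (dstar - d u) / θ) := by
  intro u hu
  set g : EuclideanSpace ℝ (Fin (m + p)) → EuclideanSpace ℝ (Fin (m + p)) :=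
    fun w => At (xbar w) + bt with hgdef
  have hgw : ∀ w, At (xbar w) + bt = g w := fun _ => rfl
  set L : ℝ := ‖At‖ ^ 2 / θ with hLdef
  have hL : 0 ≤ L := by positivity
  have hlip' : ∀ a b, ‖g a - g b‖ ≤ L * ‖a - b‖ := fun a b => hlip a b
  -- squared gradient gap bound
  have hsq : ‖g u - g ustar‖ ^ 2 ≤ 2 * L * (dstar - d u) :=
    grad_norm_sq_bound hL hconc hgrad hlip' hds hcs (hfo u hu)
  have hdu : d u ≤ dstar := hub u hu
  -- gradient gap bound
  have hgap : ‖g u - g ustar‖ ≤ ‖At‖ * Real.sqrt (2 * (dstar - d u) / θ) := by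
    have h1 : ‖At‖ * Real.sqrt (2 * (dstar - d u) / θ) =
        Real.sqrt (‖At‖ ^ 2 * (2 * (dstar - d u) / θ)) := by
      rw [Real.sqrt_mul (sq_nonneg _), Real.sqrt_sq (norm_nonneg _)]
    have h2 : ‖At‖ ^ 2 * (2 * (dstar - d u) / θ) = 2 * L * (dstar - d u) := by
      rw [hLdef]; field_simp
    rw [h1, h2]
    calc ‖g u - g ustar‖ = Real.sqrt (‖g u - g ustar‖ ^ 2) := by
          rw [Real.sqrt_sq (norm_nonneg _)]
      _ ≤ Real.sqrt (2 * L * (dstar - d u)) := Real.sqrt_le_sqrt hsq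
  -- primal suboptimality
  have key1 : d u ≤ d ustar + ⟪g ustar, u - ustar⟫ :=
    concave_first_order hconc (hgrad ustar) u
  have e3 : ⟪g ustar, u - ustar⟫ - ⟪g u, u⟫ = ⟪g ustar - g u, u⟫ := by
    rw [inner_sub_right, inner_sub_left, hgw ustar] at *
    rw [hcs]
    ring
  have e4 : ⟪g ustar - g u, u⟫ ≤ ‖g u - g ustar‖ * ‖u‖ := by
    calc ⟪g ustar - g u, u⟫ ≤ ‖g ustar - g u‖ * ‖u‖ := real_inner_le_norm _ _
      _ = ‖g u - g ustar‖ * ‖u‖ := by rw [norm_sub_rev]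
  have e5 : f (xbar u) - fstar ≤ ⟪g ustar - g u, u⟫ := by
    rw [hfd u, hfs, hgw u, ← e3, ← hds]
    linarith [key1]
  calc f (xbar u) - fstar ≤ ⟪g ustar - g u, u⟫ := e5
    _ ≤ ‖g u - g ustar‖ * ‖u‖ := e4
    _ ≤ (‖At‖ * Real.sqrt (2 * (dstar - d u) / θ)) * ‖u‖ :=
        mul_le_mul_of_nonneg_right hgap (norm_nonneg u)
    _ = ‖u‖ * ‖At‖ * Real.sqrt (2 * (dstar - d u) / θ) := by ring
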